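/- Assume Schanuel's conjecture: for every n ≥ 1 and all complex numbers z₁,…,zₙ that are linearly independent over ℚ, the field ℚ(z₁,…,zₙ, exp(z₁),…,exp(zₙ)) has transcendence degree at least n over ℚ. Let y₁,…,y_k and u₁,…,u_s be positive real algebraic numbers such that y₁,…,y_k,u₁,…,u_s are multiplicatively independent (no nontrivial multiplicative relation with integer exponents among them). Let r be a nonzero integer, let ℓ₁,…,ℓ_k be elements of the ℤ-linear span of {log u₁,…,log u_s} in ℝ, and let D₁,…,D_k be real numbers each of which is a value of a polynomial with integer coefficients evaluated at (log u₁,…,log u_s), with D_k ≠ 0. Then Σ_{i=1}^{k} (r·log yᵢ + ℓᵢ)·Dᵢ ≠ 0. -/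
import Mathlib


/-- The concluding step of the proof of Theorem 3: assuming Schanuel's conjecture, if
`y₁, …, y_k, u₁, …, u_s` are multiplicatively independent positive real algebraic numbers,
`r` is a nonzero integer, each `ℓᵢ` lies in the `ℤ`-span of the `log uⱼ`, and each `Dᵢ` is
an integer-polynomial expression in the `log uⱼ` with `D_k ≠ 0`, then
`∑ᵢ (r·log yᵢ + ℓᵢ)·Dᵢ ≠ 0`. -/
theorem schanuel_implies_sum_ne_zero
    (schanuel : ∀ (n : ℕ) (z : Fin n → ℂ), LinearIndependent ℚ z →
      ∃ g : Fin n → ℂ, (∀ i, ∃ j, g i = z j ∨ g i = Complex.exp (z j)) ∧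
        AlgebraicIndependent ℚ g)
    (k s : ℕ) (hk : 0 < k)
    (y : Fin k → ℝ) (u : Fin s → ℝ)
    (hy : ∀ i, 0 < y i) (hu : ∀ j, 0 < u j)
    (hyalg : ∀ i, IsAlgebraic ℚ (y i)) (hualg : ∀ j, IsAlgebraic ℚ (u j))
    (hmult : ∀ (a : Fin k → ℤ) (b : Fin s → ℤ),
      (∏ i, y i ^ a i) * (∏ j, u j ^ b j) = 1 → (∀ i, a i = 0) ∧ (∀ j, b j = 0))
    (r : ℤ) (hr : r ≠ 0)
    (ℓ : Fin k → ℝ)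
    (hℓ : ∀ i, ℓ i ∈ Submodule.span ℤ (Set.range fun j => Real.log (u j)))
    (D : Fin k → ℝ)
    (hD : ∀ i, ∃ p : MvPolynomial (Fin s) ℤ,
      D i = MvPolynomial.aeval (fun j => Real.log (u j)) p)
    (hDk : D ⟨k - 1, by omega⟩ ≠ 0) :
    (∑ i, ((r : ℝ) * Real.log (y i) + ℓ i) * D i) ≠ 0 := by
  classical
  set v : Fin k ⊕ Fin s → ℝ :=
    Sum.elim (fun i => Real.log (y i)) (fun j => Real.log (u j)) with hv
  -- Step 1: `ℤ`-linear independence of the logarithms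
  have hLIint : LinearIndependent ℤ v := by
    rw [Fintype.linearIndependent_iff]
    intro g hg
    have hsum : (∑ i, (g (.inl i) : ℝ) * Real.log (y i))
        + (∑ j, (g (.inr j) : ℝ) * Real.log (u j)) = 0 := by
      simpa [hv, Fintype.sum_sum_type, zsmul_eq_mul] using hg
    have hexp : (∏ i, y i ^ g (.inl i)) * (∏ j, u j ^ g (.inr j)) = 1 := by
      have h1 : ∀ i, y i ^ g (.inl i) = Real.exp ((g (.inl i) : ℝ) * Real.log (y i)) := by
        intro i; rw [← Real.rpow_intCast, Real.rpow_def_of_pos (hy i), mul_comm]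
      have h2 : ∀ j, u j ^ g (.inr j) = Real.exp ((g (.inr j) : ℝ) * Real.log (u j)) := by
        intro j; rw [← Real.rpow_intCast, Real.rpow_def_of_pos (hu j), mul_comm]
      simp only [h1, h2, ← Real.exp_sum, ← Real.exp_add, hsum, Real.exp_zero]
    obtain ⟨ha, hb⟩ := hmult _ _ hexp
    rintro (i | j)
    · exact ha i
    · exact hb j
  have hLIq : LinearIndependent ℚ v := by
    rwa [← LinearIndependent.iff_fractionRing ℤ ℚ]
  -- Step 2: the corresponding complex numbers are `ℚ`-linearly independent
  set e : Fin (k + s) ≃ Fin k ⊕ Fin s := finSumFinEquiv.symm with he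
  set z : Fin (k + s) → ℂ := fun m => ((v (e m) : ℝ) : ℂ) with hz
  have hLIz : LinearIndependent ℚ z := by
    have h1 : LinearIndependent ℚ (v ∘ e) := hLIq.comp e e.injective
    have h2 := h1.map' (IsScalarTower.toAlgHom ℚ ℝ ℂ).toLinearMap
      (by rw [LinearMap.ker_eq_bot]; exact fun a b hab => Complex.ofReal_injective hab)
    exact h2
  -- Step 3: Schanuel gives algebraic independence of the logarithms
  obtain ⟨g, hgmem, hgAI⟩ := schanuel (k + s) z hLIz
  have halg_exp : ∀ m, IsAlgebraic ℚ (Complex.exp (z m)) := by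
    intro m
    have hxalg : IsAlgebraic ℚ (Real.exp (v (e m))) := by
      rcases e m with i | j
      · simpa [hv, Real.exp_log (hy i)] using hyalg i
      · simpa [hv, Real.exp_log (hu j)] using hualg j
    have : Complex.exp (z m) = ((Real.exp (v (e m)) : ℝ) : ℂ) := by
      rw [hz, Complex.ofReal_exp]
    rw [this]
    obtain ⟨p, hp0, hpe⟩ := hxalg
    exact ⟨p, hp0, by
      rw [show ((Real.exp (v (e m)) : ℝ) : ℂ) = algebraMap ℝ ℂ (Real.exp (v (e m))) from rfl,
        Polynomial.aeval_algebraMap_apply, hpe, map_zero]⟩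
  have hjex : ∀ i, ∃ m, g i = z m := by
    intro i
    obtain ⟨m, hm | hm⟩ := hgmem i
    · exact ⟨m, hm⟩
    · exact absurd (hm ▸ halg_exp m) (hgAI.transcendental i)
  choose j hj using hjex
  have hginj : Function.Injective g := hgAI.injective
  have hjinj : Function.Injective j := fun a b hab => hginj (by rw [hj, hj, hab])
  have hjbij : Function.Bijective j := Finite.injective_iff_bijective.mp hjinj
  set σ : Fin (k + s) ≃ Fin (k + s) := Equiv.ofBijective j hjbij with hσ
  have hzAI : AlgebraicIndependent ℚ z := by
    have hzg : z = g ∘ σ.symm := by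
      funext m
      have h1 : g (σ.symm m) = z (j (σ.symm m)) := hj _
      have h2 : j (σ.symm m) = m := σ.apply_symm_apply m
      simp [Function.comp, h1, h2]
    rw [hzg]
    exact hgAI.comp σ.symm σ.symm.injective
  have hvAI : AlgebraicIndependent ℚ v := by
    have h1 : AlgebraicIndependent ℚ (z ∘ e.symm) := hzAI.comp e.symm e.symm.injective
    have h2 : (IsScalarTower.toAlgHom ℚ ℝ ℂ) ∘ v = z ∘ e.symm := by
      funext i; simp [hz, Function.comp]
    exact AlgebraicIndependent.of_comp (IsScalarTower.toAlgHom ℚ ℝ ℂ) (h2 ▸ h1)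
  -- Step 4: polynomial bookkeeping
  have hinj : Function.Injective (MvPolynomial.aeval v : MvPolynomial (Fin k ⊕ Fin s) ℚ →ₐ[ℚ] ℝ) :=
    algebraicIndependent_iff_injective_aeval.mp hvAI
  choose c hc using fun i => (Submodule.mem_span_range_iff_exists_fun ℤ).mp (hℓ i)
  choose p hp using hD
  set P : Fin k → MvPolynomial (Fin k ⊕ Fin s) ℚ := fun i =>
    MvPolynomial.rename Sum.inr (MvPolynomial.map (Int.castRingHom ℚ) (p i)) with hP
  set Q : MvPolynomial (Fin k ⊕ Fin s) ℚ :=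
    ∑ i, (MvPolynomial.C (r : ℚ) * MvPolynomial.X (Sum.inl i)
        + ∑ j, MvPolynomial.C ((c i j : ℚ)) * MvPolynomial.X (Sum.inr j)) * P i with hQ
  have keyeval : ∀ x : Fin k → ℝ,
      MvPolynomial.aeval (Sum.elim x fun j => Real.log (u j)) Q
        = ∑ i, ((r : ℝ) * x i + ℓ i) * D i := by
    intro x
    rw [hQ, map_sum]
    refine Finset.sum_congr rfl fun i _ => ?_
    have hPe : MvPolynomial.aeval (Sum.elim x fun j => Real.log (u j)) (P i) = D i := by
      rw [hP, MvPolynomial.aeval_rename]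
      have : (Sum.elim x fun j => Real.log (u j)) ∘ Sum.inr = fun j => Real.log (u j) := rfl
      rw [this, show (Int.castRingHom ℚ) = algebraMap ℤ ℚ from rfl,
        MvPolynomial.aeval_map_algebraMap, hp]
    rw [map_mul, hPe, map_add, map_mul, MvPolynomial.aeval_C, MvPolynomial.aeval_X, map_sum]
    have hℓe : ∑ j, MvPolynomial.aeval (Sum.elim x fun j => Real.log (u j))
        (MvPolynomial.C ((c i j : ℚ)) * MvPolynomial.X (Sum.inr j)) = ℓ i := by
      rw [← hc i]
      refine Finset.sum_congr rfl fun j _ => ?_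
      rw [map_mul, MvPolynomial.aeval_C, MvPolynomial.aeval_X]
      simp [zsmul_eq_mul]
    rw [hℓe]
    simp
  -- Step 5: conclusion
  intro h0
  have hveq : Sum.elim (fun i => Real.log (y i)) (fun j => Real.log (u j)) = v := rfl
  have hQv : MvPolynomial.aeval v Q = 0 := by
    rw [← hveq, keyeval, h0]
  have hQ0 : Q = 0 := hinj (by rw [hQv, map_zero])
  set i₀ : Fin k := ⟨k - 1, by omega⟩ with hi₀
  have h2 := keyeval (fun i => Real.log (y i) + if i = i₀ then 1 else 0)
  rw [hQ0, map_zero] at h2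
  have h3 : ∑ i, ((r : ℝ) * (Real.log (y i) + if i = i₀ then 1 else 0) + ℓ i) * D i
      = (∑ i, ((r : ℝ) * Real.log (y i) + ℓ i) * D i)
        + ∑ i, ((r : ℝ) * (if i = i₀ then 1 else 0)) * D i := by
    rw [← Finset.sum_add_distrib]
    refine Finset.sum_congr rfl fun i _ => ?_
    ring
  rw [h3, h0, zero_add] at h2
  have h4 : ∑ i, ((r : ℝ) * (if i = i₀ then 1 else 0)) * D i = (r : ℝ) * D i₀ := by
    rw [Finset.sum_eq_single i₀]
    · simp
    · intro b _ hb; simp [hb]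
    · intro hb; exact absurd (Finset.mem_univ i₀) hb
  rw [h4] at h2
  have : (r : ℝ) = 0 ∨ D i₀ = 0 := mul_eq_zero.mp h2.symm
  rcases this with h | h
  · exact hr (by exact_mod_cast h)
  · exact hDk h
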